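/- For every real a with 0 < a ≤ 0.179, one has h₁(a) ≥ 0.85, where h₁(a) = (1 - (2·arccos(a) + arccos(2a-1))/(2π))/a. -/

import Mathlib

/-- `h₁(a) = (1 - (2·arccos a + arccos(2a-1))/(2π))/a`. -/
noncomputable def h₁ (a : ℝ) : ℝ :=
  (1 - (2 * Real.arccos a + Real.arccos (2 * a - 1)) / (2 * Real.pi)) / a

/-- For `0 < a ≤ 0.179`, `h₁(a) ≥ 0.85`. -/
theorem stmt17 (a : ℝ) (h0 : 0 < a) (h1 : a ≤ (0.179 : ℝ)) : h₁ a ≥ (0.85 : ℝ) := by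
  have ha1 : a ≤ 1 := by linarith
  set s := Real.sqrt a with hs_def
  have hs0 : 0 < s := Real.sqrt_pos.mpr h0
  have hs2 : s ^ 2 = a := Real.sq_sqrt h0.le
  have hsle : s ≤ 0.424 := by nlinarith
  have hpi := Real.pi_gt_d6
  have hpi' := Real.pi_lt_d2
  -- arcsin a ≥ a
  have harcsin : a ≤ Real.arcsin a := by
    have h := Real.sin_le (Real.arcsin_nonneg.mpr h0.le)
    rwa [Real.sin_arcsin (by linarith) ha1] at h
  have K1 : Real.arccos a ≤ Real.pi / 2 - a := by
    rw [Real.arccos]; linarith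
  -- arccos(2a-1) ≤ π - 2s
  have hcos : (1 : ℝ) - 2 * a ≤ Real.cos (2 * s) := by
    have hsin : Real.sin s ≤ s := Real.sin_le hs0.le
    have hsin0 : 0 ≤ Real.sin s := Real.sin_nonneg_of_nonneg_of_le_pi hs0.le (by linarith)
    have h2 : Real.cos (2 * s) = 1 - 2 * Real.sin s ^ 2 := by
      rw [Real.cos_two_mul, ← Real.sin_sq_add_cos_sq s]; ring
    nlinarith
  have K2 : Real.arccos (2 * a - 1) ≤ Real.pi - 2 * s := by
    have hneg : (2 : ℝ) * a - 1 = -(1 - 2 * a) := by ring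
    rw [hneg, Real.arccos_neg]
    have h2s : Real.arccos (Real.cos (2 * s)) = 2 * s :=
      Real.arccos_cos (by linarith) (by linarith)
    have hmono : Real.arccos (Real.cos (2 * s)) ≤ Real.arccos (1 - 2 * a) := by
      unfold Real.arccos
      have := Real.monotone_arcsin hcos
      linarith
    linarith [hmono, h2s]
  -- combine
  have hnum : (a + s) / Real.pi ≤
      1 - (2 * Real.arccos a + Real.arccos (2 * a - 1)) / (2 * Real.pi) := by
    rw [div_le_iff₀ (by positivity), sub_mul, div_mul_eq_mul_div, mul_comm,
      ← div_mul_eq_mul_div]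
    have h2pi : (0:ℝ) < 2 * Real.pi := by positivity
    have : (2 * Real.arccos a + Real.arccos (2 * a - 1)) / (2 * Real.pi) * Real.pi
        = (2 * Real.arccos a + Real.arccos (2 * a - 1)) / 2 := by
      field_simp
    rw [this]
    linarith
  rw [h₁, ge_iff_le, le_div_iff₀ h0]
  have hfin : 0.85 * a ≤ (a + s) / Real.pi := by
    rw [le_div_iff₀ (by positivity)]
    nlinarith
  linarith
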